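/- arXiv:1809.03460 — 6 statements merged into one kernel-verified Lean document; each statement's English description precedes it below -/
import Mathlib

section
/- Let G be a group and let g ∈ G be a nontrivial element of finite order. Let l, k be integers, not both zero. Let Q be the quotient of the free product G ∗ F(x) (F(x) the free group on one generator x) by the normal closure of the element x^l · g · x^k · g⁻¹. Then the natural homomorphism G → Q (induced by the inclusion of G into the free product) is bijective if and only if |l + k| = 1 and (l = 0 or k = 0). -/
open Monoid Monoid.Coprod

namespace Stmt2Aux

variable {G : Type*} [Group G]

/-- The relator `xˡ g xᵏ g⁻¹`. -/
def rel (g : G) (l k : ℤ) : Coprod G (FreeGroup Unit) :=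
  (Coprod.inr (FreeGroup.of ()) : Coprod G (FreeGroup Unit)) ^ l * Coprod.inl g *
    (Coprod.inr (FreeGroup.of ()) : Coprod G (FreeGroup Unit)) ^ k * Coprod.inl g⁻¹

/-- Any homomorphism killing the relator kills the normal closure. -/
lemma psi_eq_one_of_mem {H : Type*} [Group H] {g : G} {l k : ℤ}
    (ψ : Coprod G (FreeGroup Unit) →* H) (hψ : ψ (rel g l k) = 1)
    {c : Coprod G (FreeGroup Unit)} (hc : c ∈ Subgroup.normalClosure {rel g l k}) :
    ψ c = 1 := by
  have hr : rel g l k ∈ ψ.ker := hψ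
  have h : Subgroup.normalClosure {rel g l k} ≤ ψ.ker :=
    Subgroup.normalClosure_le_normal (Set.singleton_subset_iff.mpr hr)
  exact h hc

/-- If the natural map is surjective, then every hom killing the relator sends `x` into
the image of `G`. -/
lemma exists_of_surj {H : Type*} [Group H] {g : G} {l k : ℤ}
    (hs : Function.Surjective
      ((QuotientGroup.mk' (Subgroup.normalClosure {rel g l k})).comp
        (Coprod.inl : G →* Coprod G (FreeGroup Unit))))
    (ψ : Coprod G (FreeGroup Unit) →* H) (hψ : ψ (rel g l k) = 1) :
    ∃ g₀ : G, ψ (Coprod.inl g₀) = ψ (Coprod.inr (FreeGroup.of ())) := by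
  obtain ⟨g₀, h⟩ := hs ((QuotientGroup.mk' (Subgroup.normalClosure {rel g l k}))
    (Coprod.inr (FreeGroup.of ())))
  refine ⟨g₀, ?_⟩
  have hmem : (Coprod.inl g₀ : Coprod G (FreeGroup Unit))⁻¹ * Coprod.inr (FreeGroup.of ()) ∈
      Subgroup.normalClosure {rel g l k} := by
    rwa [MonoidHom.comp_apply, QuotientGroup.mk'_apply, QuotientGroup.mk'_apply,
      QuotientGroup.eq] at h
  have := psi_eq_one_of_mem ψ hψ hmem
  rw [map_mul, map_inv] at this
  exact (inv_mul_eq_one.mp this)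

/-- The natural map is always injective. -/
lemma inj (g : G) (l k : ℤ) :
    Function.Injective
      ((QuotientGroup.mk' (Subgroup.normalClosure {rel g l k})).comp
        (Coprod.inl : G →* Coprod G (FreeGroup Unit))) := by
  set π : Coprod G (FreeGroup Unit) →* G := Coprod.lift (MonoidHom.id G) 1 with hπ
  have hπr : π (rel g l k) = 1 := by
    simp [rel, hπ, map_mul, map_zpow, one_zpow]
  intro a b hab
  have hmem : (Coprod.inl a : Coprod G (FreeGroup Unit))⁻¹ * Coprod.inl b ∈
      Subgroup.normalClosure {rel g l k} := by
    rwa [MonoidHom.comp_apply, MonoidHom.comp_apply, QuotientGroup.mk'_apply,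
      QuotientGroup.mk'_apply, QuotientGroup.eq] at hab
  have := psi_eq_one_of_mem π hπr hmem
  rw [map_mul, map_inv] at this
  have h2 : π (Coprod.inl a) = π (Coprod.inl b) := inv_mul_eq_one.mp this
  simpa [hπ] using h2

/-- If `x` itself lies in the normal closure, the natural map is surjective. -/
lemma surj_of_x_mem (g : G) (l k : ℤ)
    (hx : (Coprod.inr (FreeGroup.of ()) : Coprod G (FreeGroup Unit)) ∈
      Subgroup.normalClosure {rel g l k}) :
    Function.Surjective
      ((QuotientGroup.mk' (Subgroup.normalClosure {rel g l k})).comp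
        (Coprod.inl : G →* Coprod G (FreeGroup Unit))) := by
  set N := Subgroup.normalClosure {rel g l k}
  intro q
  obtain ⟨c, rfl⟩ := QuotientGroup.mk'_surjective N q
  induction c using Coprod.induction_on with
  | inl m => exact ⟨m, rfl⟩
  | inr w =>
      refine ⟨1, ?_⟩
      have h1 : (QuotientGroup.mk' N).comp (Coprod.inr : FreeGroup Unit →* _) = 1 := by
        apply FreeGroup.ext_hom
        intro a
        cases a
        simpa [QuotientGroup.eq_one_iff] using hx
      have h2 : (QuotientGroup.mk' N) (Coprod.inr w) = 1 := by
        have := DFunLike.congr_fun h1 w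
        simpa using this
      simp [h2]
  | mul c d hc hd =>
      obtain ⟨a, ha⟩ := hc
      obtain ⟨b, hb⟩ := hd
      exact ⟨a * b, by rw [map_mul, ha, hb, map_mul]⟩

/-- Backward direction: the conditions imply `x` lies in the normal closure. -/
lemma x_mem (g : G) (l k : ℤ) (habs : |l + k| = 1) (hor : l = 0 ∨ k = 0) :
    (Coprod.inr (FreeGroup.of ()) : Coprod G (FreeGroup Unit)) ∈
      Subgroup.normalClosure {rel g l k} := by
  have hrel : rel g l k ∈ Subgroup.normalClosure {rel g l k} :=
    Subgroup.subset_normalClosure rfl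
  set N := Subgroup.normalClosure {rel g l k} with hN
  rcases hor with rfl | rfl
  · -- l = 0 : rel = g x^k g⁻¹
    simp only [zero_add] at habs
    have hr : rel g 0 k = Coprod.inl g *
        (Coprod.inr (FreeGroup.of ()) : Coprod G (FreeGroup Unit)) ^ k * Coprod.inl g⁻¹ := by
      simp [rel]
    have hxk : (Coprod.inr (FreeGroup.of ()) : Coprod G (FreeGroup Unit)) ^ k ∈ N := by
      have : (Coprod.inl g⁻¹ : Coprod G (FreeGroup Unit)) * rel g 0 k *
          (Coprod.inl g⁻¹)⁻¹ ∈ N := Subgroup.Normal.conj_mem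
        (Subgroup.normalClosure_normal) _ hrel _
      rw [hr] at this
      simpa [mul_assoc] using this
    rcases abs_eq (by norm_num : (0:ℤ) ≤ 1) |>.mp habs with h1 | h1
    · rw [h1] at hxk; simpa using hxk
    · rw [h1] at hxk; simpa using (inv_mem hxk)
  · -- k = 0 : rel = x^l
    simp only [add_zero] at habs
    have hr : rel g l 0 =
        (Coprod.inr (FreeGroup.of ()) : Coprod G (FreeGroup Unit)) ^ l := by
      simp [rel, mul_assoc, ← map_mul]
    rw [hr] at hrel
    rcases abs_eq (by norm_num : (0:ℤ) ≤ 1) |>.mp habs with h1 | h1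
    · rw [h1] at hrel; simpa using hrel
    · rw [h1] at hrel; simpa using (inv_mem hrel)

/-- Surjectivity forces `|l + k| = 1`. -/
lemma abs_eq_one_of_surj (g : G) (l k : ℤ)
    (hs : Function.Surjective
      ((QuotientGroup.mk' (Subgroup.normalClosure {rel g l k})).comp
        (Coprod.inl : G →* Coprod G (FreeGroup Unit)))) :
    |l + k| = 1 := by
  set m : ℕ := (l + k).natAbs with hm
  set ψ : Coprod G (FreeGroup Unit) →* Multiplicative (ZMod m) :=
    Coprod.lift 1 (FreeGroup.lift fun _ => Multiplicative.ofAdd (1 : ZMod m)) with hψ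
  have hψr : ψ (rel g l k) = 1 := by
    have : ((l + k : ℤ) : ZMod m) = 0 := by
      rw [ZMod.intCast_zmod_eq_zero_iff_dvd]
      exact Int.natAbs_dvd.mpr dvd_rfl
    simp only [rel, hψ, map_mul, map_zpow, lift_apply_inl, lift_apply_inr,
      FreeGroup.lift_apply_of, MonoidHom.one_apply, one_mul, mul_one]
    rw [← ofAdd_zsmul, ← ofAdd_zsmul, ← ofAdd_add]
    rw [show l • (1 : ZMod m) + k • (1 : ZMod m) = ((l + k : ℤ) : ZMod m) by push_cast [zsmul_eq_mul]; ring,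
      this]
    rfl
  obtain ⟨g₀, h⟩ := exists_of_surj hs ψ hψr
  have h1 : (1 : Multiplicative (ZMod m)) = Multiplicative.ofAdd (1 : ZMod m) := by
    simpa [hψ, lift_apply_inl, lift_apply_inr, FreeGroup.lift_apply_of] using h
  have h2 : ((1 : ℤ) : ZMod m) = 0 := by
    have := congrArg Multiplicative.toAdd h1
    simpa using this.symm
  rw [ZMod.intCast_zmod_eq_zero_iff_dvd] at h2
  have h3 : m = 1 := Nat.dvd_one.mp (by exact_mod_cast h2)
  rw [Int.abs_eq_natAbs, ← hm, h3, Nat.cast_one]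


/-! ### Arithmetic bounds -/

lemma two_le_pow_sub (a : ℤ) (ha : 2 ≤ a) (n : ℕ) (hn : 2 ≤ n) :
    2 ≤ a ^ n - (a - 1) ^ n := by
  have h := geom_sum₂_mul a (a - 1) n
  rw [show a - (a - 1) = 1 by ring, mul_one] at h
  rw [← h]
  have hterm : ∀ i ∈ Finset.range n, (1 : ℤ) ≤ a ^ i * (a - 1) ^ (n - 1 - i) := by
    intro i _
    have h1 : (1 : ℤ) ≤ a ^ i := one_le_pow₀ (by omega)
    have h2 : (1 : ℤ) ≤ (a - 1) ^ (n - 1 - i) := one_le_pow₀ (by omega)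
    nlinarith
  have hsum : ((n : ℤ)) ≤ ∑ i ∈ Finset.range n, a ^ i * (a - 1) ^ (n - 1 - i) := by
    calc ((n : ℤ)) = ∑ _i ∈ Finset.range n, (1 : ℤ) := by simp
    _ ≤ _ := Finset.sum_le_sum hterm
  have : (2 : ℤ) ≤ n := by exact_mod_cast hn
  linarith

lemma two_le_natAbs_pow_sub_pow (a b : ℤ) (ha : a ≠ 0) (hb : b ≠ 0) (hab : a - b = 1)
    (n : ℕ) (hn : 2 ≤ n) : 2 ≤ (a ^ n - b ^ n).natAbs := by
  have hb' : b = a - 1 := by omega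
  subst hb'
  rcases lt_or_ge a 0 with hneg | hpos
  · have hA : 2 ≤ 1 - a := by omega
    have h := two_le_pow_sub (1 - a) hA n hn
    have e1 : (1 - a : ℤ) = -(a - 1) := by ring
    have e2 : (-(a - 1) - 1 : ℤ) = -a := by ring
    rw [e1, e2] at h
    rcases Nat.even_or_odd n with hpar | hpar
    · rw [hpar.neg_pow, hpar.neg_pow] at h
      set X := a ^ n; set Y := (a - 1) ^ n
      omega
    · rw [hpar.neg_pow, hpar.neg_pow] at h
      set X := a ^ n; set Y := (a - 1) ^ n
      omega
  · have ha2 : 2 ≤ a := by omega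
    have h := two_le_pow_sub a ha2 n hn
    set X := a ^ n; set Y := (a - 1) ^ n
    omega

lemma two_le_D (l k : ℤ) (hl : l ≠ 0) (hk : k ≠ 0) (habs : |l + k| = 1) (n : ℕ)
    (hn : 2 ≤ n) : 2 ≤ (l ^ n - (-k) ^ n).natAbs := by
  have hk' : -k ≠ 0 := neg_ne_zero.mpr hk
  rcases (abs_eq (by norm_num : (0:ℤ) ≤ 1)).mp habs with h1 | h1
  · exact two_le_natAbs_pow_sub_pow l (-k) hl hk' (by omega) n hn
  · have h := two_le_natAbs_pow_sub_pow (-k) l hk' hl (by omega) n hn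
    set X := l ^ n; set Y := (-k) ^ n
    omega

/-! ### The shift action and the annihilating function -/

/-- Translation automorphism of `Multiplicative (G → ZMod D)`. -/
def shiftMulAut (D : ℕ) (h : G) : MulAut (Multiplicative (G → ZMod D)) where
  toFun f := Multiplicative.ofAdd (fun a => f.toAdd (h⁻¹ * a))
  invFun f := Multiplicative.ofAdd (fun a => f.toAdd (h * a))
  left_inv f := by
    show Multiplicative.ofAdd (fun a => f.toAdd (h⁻¹ * (h * a))) = f
    simp [inv_mul_cancel_left]
  right_inv f := by
    show Multiplicative.ofAdd (fun a => f.toAdd (h * (h⁻¹ * a))) = f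
    simp [mul_inv_cancel_left]
  map_mul' f f' := rfl

/-- The translation action as a homomorphism `G →* MulAut _`. -/
def shiftHom (D : ℕ) : G →* MulAut (Multiplicative (G → ZMod D)) where
  toFun := shiftMulAut D
  map_one' := by
    apply MulEquiv.ext
    intro f
    show Multiplicative.ofAdd (fun a => f.toAdd ((1 : G)⁻¹ * a)) = f
    simp
  map_mul' h₁ h₂ := by
    apply MulEquiv.ext
    intro f
    show Multiplicative.ofAdd (fun a => f.toAdd ((h₁ * h₂)⁻¹ * a)) =
      Multiplicative.ofAdd (fun a => f.toAdd (h₂⁻¹ * (h₁⁻¹ * a)))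
    simp [mul_inv_rev, mul_assoc]

-- The function supported on `⟨g⟩` given by powers of the unit `u`.
open scoped Classical in
noncomputable def vfun (D : ℕ) (g : G) (u : (ZMod D)ˣ) : G → ZMod D := fun a =>
  if h : ∃ m : ℤ, g ^ m = a then ((u ^ h.choose : (ZMod D)ˣ) : ZMod D) else 0

lemma vfun_zpow (D : ℕ) (g : G) (u : (ZMod D)ˣ) (hu : u ^ (orderOf g : ℤ) = 1) (m : ℤ) :
    vfun D g u (g ^ m) = ((u ^ m : (ZMod D)ˣ) : ZMod D) := by
  have hex : ∃ m' : ℤ, g ^ m' = g ^ m := ⟨m, rfl⟩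
  unfold vfun
  rw [dif_pos hex]
  have hspec := hex.choose_spec
  have hdvd : (orderOf g : ℤ) ∣ hex.choose - m := by
    rw [orderOf_dvd_iff_zpow_eq_one]
    rw [zpow_sub, hspec]
    simp
  obtain ⟨q, hq⟩ := hdvd
  have hc : hex.choose = m + (orderOf g : ℤ) * q := by omega
  rw [hc, zpow_add, zpow_mul, hu, one_zpow, mul_one]

lemma vfun_not (D : ℕ) (g : G) (u : (ZMod D)ˣ) {a : G} (h : ¬ ∃ m : ℤ, g ^ m = a) :
    vfun D g u a = 0 := by
  unfold vfun
  exact dif_neg h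

lemma vfun_rel (D : ℕ) (g : G) (u : (ZMod D)ˣ) (hu : u ^ (orderOf g : ℤ) = 1) (l k : ℤ)
    (hlu : ((l : ℤ) : ZMod D) * ↑u = ((-k : ℤ) : ZMod D)) (a : G) :
    ((l : ℤ) : ZMod D) * vfun D g u a + ((k : ℤ) : ZMod D) * vfun D g u (g⁻¹ * a) = 0 := by
  by_cases h : ∃ m : ℤ, g ^ m = a
  · obtain ⟨m, rfl⟩ := h
    have h2 : g⁻¹ * g ^ m = g ^ (-1 + m) := by rw [zpow_add, zpow_neg_one]
    rw [h2, vfun_zpow D g u hu, vfun_zpow D g u hu]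
    have h3 : (u ^ m : (ZMod D)ˣ) = u * u ^ (-1 + m) := by
      rw [show m = 1 + (-1 + m) by ring, zpow_add, zpow_one]
      ring_nf
    rw [h3]
    have hlu' : ((l : ℤ) : ZMod D) * ↑u = -((k : ℤ) : ZMod D) := by
      rw [hlu]; push_cast; ring
    simp only [Units.val_mul]
    linear_combination ((u ^ (-1 + m) : (ZMod D)ˣ) : ZMod D) * hlu'
  · have h' : ¬ ∃ m : ℤ, g ^ m = g⁻¹ * a := by
      rintro ⟨m, hm⟩
      exact h ⟨1 + m, by rw [zpow_add, zpow_one, hm, mul_inv_cancel_left]⟩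
    rw [vfun_not D g u h, vfun_not D g u h', mul_zero, mul_zero, add_zero]


/-- The hard direction: if `l, k` are both nonzero (and `|l+k| = 1`), the natural map is
not surjective. -/
lemma not_both (g : G) (hg : g ≠ 1) (hfin : IsOfFinOrder g) (l k : ℤ)
    (hl : l ≠ 0) (hk : k ≠ 0) (habs : |l + k| = 1)
    (hs : Function.Surjective
      ((QuotientGroup.mk' (Subgroup.normalClosure {rel g l k})).comp
        (Coprod.inl : G →* Coprod G (FreeGroup Unit)))) : False := by
  set n := orderOf g with hn
  have hn0 : n ≠ 0 := hfin.orderOf_pos.ne'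
  have hn1 : n ≠ 1 := fun h => hg (orderOf_eq_one_iff.mp h)
  have hn2 : 2 ≤ n := by omega
  set M : ℤ := l ^ n - (-k) ^ n with hM
  -- coprimality facts
  have hcop : IsCoprime l k := by
    rcases (abs_eq (by norm_num : (0:ℤ) ≤ 1)).mp habs with h1 | h1
    · exact ⟨1, 1, by linarith⟩
    · exact ⟨-1, -1, by linarith⟩
  have hcopl : IsCoprime l M := by
    have h1 : IsCoprime l (-((-k) ^ n)) := hcop.neg_right.pow_right.neg_right
    have h2 := h1.add_mul_left_right (l ^ (n - 1))
    have h3 : -((-k) ^ n) + l * l ^ (n - 1) = M := by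
      have hll : l * l ^ (n - 1) = l ^ n := by
        conv_rhs => rw [show n = (n - 1) + 1 by omega]
        rw [pow_succ]; ring
      rw [hll, hM]; ring
    rwa [h3] at h2
  have hcopk : IsCoprime (-k) M := by
    have h1 : IsCoprime (-k) (l ^ n) := (hcop.symm.neg_left).pow_right
    have h2 := h1.add_mul_left_right (-((-k) ^ (n - 1)))
    have h3 : l ^ n + (-k) * -((-k) ^ (n - 1)) = M := by
      have hkk : (-k) * (-k) ^ (n - 1) = (-k) ^ n := by
        conv_rhs => rw [show n = (n - 1) + 1 by omega]
        rw [pow_succ]; ring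
      rw [hM, ← hkk]; ring
    rwa [h3] at h2
  set D : ℕ := M.natAbs with hD
  have hD2 : 2 ≤ D := two_le_D l k hl hk habs n hn2
  haveI : Fact (1 < D) := ⟨by omega⟩
  have hM0 : ((M : ℤ) : ZMod D) = 0 := by
    rw [ZMod.intCast_zmod_eq_zero_iff_dvd]
    exact Int.natAbs_dvd.mpr dvd_rfl
  -- units of `ZMod D`
  have hlu : IsUnit ((l : ℤ) : ZMod D) := by
    obtain ⟨p, q, hpq⟩ := hcopl
    have hcast : (p : ZMod D) * (l : ZMod D) = 1 := by
      have h := congrArg (fun z : ℤ => (z : ZMod D)) hpq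
      push_cast at h
      rw [show ((M : ℤ) : ZMod D) = 0 from hM0] at h
      simpa using h
    exact IsUnit.of_mul_eq_one p (by rw [mul_comm]; exact hcast)
  have hku : IsUnit ((-k : ℤ) : ZMod D) := by
    obtain ⟨p, q, hpq⟩ := hcopk
    have hcast : (p : ZMod D) * ((-k : ℤ) : ZMod D) = 1 := by
      have h := congrArg (fun z : ℤ => (z : ZMod D)) hpq
      push_cast at h
      rw [show ((M : ℤ) : ZMod D) = 0 from hM0] at h
      push_cast
      simpa using h
    exact IsUnit.of_mul_eq_one p (by rw [mul_comm]; exact hcast)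
  set L : (ZMod D)ˣ := hlu.unit with hL
  set K : (ZMod D)ˣ := hku.unit with hK
  have hLval : (L : ZMod D) = ((l : ℤ) : ZMod D) := hlu.unit_spec
  have hKval : (K : ZMod D) = ((-k : ℤ) : ZMod D) := hku.unit_spec
  set u : (ZMod D)ˣ := K * L⁻¹ with hu
  have hln : (((l : ℤ) : ZMod D)) ^ n = (((-k : ℤ) : ZMod D)) ^ n := by
    have h := hM0
    rw [hM] at h
    push_cast at h
    have := sub_eq_zero.mp h
    push_cast
    simpa using this
  have hKLpow : K ^ n = L ^ n := by
    apply Units.ext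
    rw [Units.val_pow_eq_pow_val, Units.val_pow_eq_pow_val, hKval, hLval]
    exact hln.symm
  have hun : u ^ (n : ℤ) = 1 := by
    rw [zpow_natCast, hu, mul_pow, inv_pow, hKLpow, mul_inv_cancel]
  have hlu' : ((l : ℤ) : ZMod D) * ↑u = ((-k : ℤ) : ZMod D) := by
    rw [hu, Units.val_mul, ← hLval, ← hKval]
    have hinv : (L : ZMod D) * ↑L⁻¹ = 1 := by
      rw [← Units.val_mul, mul_inv_cancel, Units.val_one]
    linear_combination ((K : ZMod D)) * hinv
  set v : G → ZMod D := vfun D g u with hv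
  have hv1 : v 1 = 1 := by
    have h0 : (1 : G) = g ^ (0 : ℤ) := (zpow_zero g).symm
    rw [hv, h0, vfun_zpow D g u hun 0, zpow_zero, Units.val_one]
  have hvne : v ≠ 0 := by
    intro h
    have h1 := congrFun h 1
    rw [hv1] at h1
    exact one_ne_zero h1
  -- the homomorphism into the semidirect product
  set ψ : Coprod G (FreeGroup Unit) →*
      (Multiplicative (G → ZMod D) ⋊[shiftHom (G := G) D] G) :=
    Coprod.lift SemidirectProduct.inr
      (FreeGroup.lift fun _ => SemidirectProduct.inl (Multiplicative.ofAdd v)) with hψ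
  have e1 : ψ (Coprod.inr (FreeGroup.of ())) =
      SemidirectProduct.inl (Multiplicative.ofAdd v) := by
    simp [hψ]
  have e2 : ∀ h : G, ψ (Coprod.inl h) = SemidirectProduct.inr h := fun h => by simp [hψ]
  have key : (Multiplicative.ofAdd v) ^ l *
      (shiftHom (G := G) D g) ((Multiplicative.ofAdd v) ^ k) = 1 := by
    rw [← ofAdd_zsmul, ← ofAdd_zsmul]
    rw [show (shiftHom (G := G) D g) (Multiplicative.ofAdd (k • v)) =
        Multiplicative.ofAdd (fun a => (k • v) (g⁻¹ * a)) from rfl]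
    rw [← ofAdd_add]
    have hzero : (l • v + fun a => (k • v) (g⁻¹ * a)) = 0 := by
      funext a
      have h := vfun_rel D g u hun l k hlu' a
      simp only [Pi.add_apply, Pi.smul_apply, Pi.zero_apply, zsmul_eq_mul]
      rw [hv]
      exact h
    rw [hzero, ofAdd_zero]
  have hψr : ψ (rel g l k) = 1 := by
    rw [rel, map_mul, map_mul, map_mul, map_zpow, map_zpow, e1, e2, e2]
    rw [show (SemidirectProduct.inl (Multiplicative.ofAdd v) :
          Multiplicative (G → ZMod D) ⋊[shiftHom (G := G) D] G) ^ l =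
        SemidirectProduct.inl ((Multiplicative.ofAdd v) ^ l) from (map_zpow _ _ _).symm]
    rw [show (SemidirectProduct.inl (Multiplicative.ofAdd v) :
          Multiplicative (G → ZMod D) ⋊[shiftHom (G := G) D] G) ^ k =
        SemidirectProduct.inl ((Multiplicative.ofAdd v) ^ k) from (map_zpow _ _ _).symm]
    have hmain : (SemidirectProduct.inl ((Multiplicative.ofAdd v) ^ l) :
          Multiplicative (G → ZMod D) ⋊[shiftHom (G := G) D] G) *
        (SemidirectProduct.inr g *
          SemidirectProduct.inl ((Multiplicative.ofAdd v) ^ k) *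
          SemidirectProduct.inr g⁻¹) = 1 := by
      rw [← SemidirectProduct.inl_aut, ← map_mul, key, map_one]
    simpa [mul_assoc] using hmain
  obtain ⟨g₀, hg₀⟩ := exists_of_surj hs ψ hψr
  rw [e2 g₀, e1] at hg₀
  have hleft := congrArg SemidirectProduct.left hg₀
  simp only [SemidirectProduct.left_inr, SemidirectProduct.left_inl] at hleft
  apply hvne
  have h2 := congrArg Multiplicative.toAdd hleft
  simpa using h2.symm

end Stmt2Aux

open Stmt2Aux in
/-- Case (M) of Theorem 4.2: for `g ∈ G` a nontrivial element of finite order and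
integers `l, k` not both zero, the natural map `G → ⟨G, x | xˡ g xᵏ g⁻¹⟩` is an
isomorphism iff `|l + k| = 1` and (`l = 0` or `k = 0`). -/
theorem stmt_2 {G : Type*} [Group G] (g : G) (hg : g ≠ 1) (hfin : IsOfFinOrder g)
    (l k : ℤ) (hlk : ¬(l = 0 ∧ k = 0)) :
    Function.Bijective
      ((QuotientGroup.mk' (Subgroup.normalClosure
          ({(Coprod.inr (FreeGroup.of ()) : Coprod G (FreeGroup Unit)) ^ l * Coprod.inl g *
            (Coprod.inr (FreeGroup.of ()) : Coprod G (FreeGroup Unit)) ^ k * Coprod.inl g⁻¹} :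
            Set (Coprod G (FreeGroup Unit))))).comp
        (Coprod.inl : G →* Coprod G (FreeGroup Unit))) ↔
      (|l + k| = 1 ∧ (l = 0 ∨ k = 0)) := by
  have hset : ({(Coprod.inr (FreeGroup.of ()) : Coprod G (FreeGroup Unit)) ^ l * Coprod.inl g *
      (Coprod.inr (FreeGroup.of ()) : Coprod G (FreeGroup Unit)) ^ k * Coprod.inl g⁻¹} :
      Set (Coprod G (FreeGroup Unit))) = {rel g l k} := rfl
  rw [hset]
  constructor
  · rintro ⟨hinj, hsurj⟩
    have habs := abs_eq_one_of_surj g l k hsurj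
    refine ⟨habs, ?_⟩
    by_contra hcon
    push_neg at hcon
    exact not_both g hg hfin l k hcon.1 hcon.2 habs hsurj
  · rintro ⟨habs, hor⟩
    exact ⟨inj g l k, surj_of_x_mem g l k (x_mem g l k habs hor)⟩
end

section
/- Let G be a group, let g, h ∈ G, and let l be a nonzero integer. Let Q be the quotient of the free product G ∗ F(x) (F(x) the free group on one generator x) by the normal closure of the element x^l · g · x^l · h. Then the image in Q of the element x^l · g is not conjugate in Q to the image of any element of G; that is, for all q ∈ Q and all a ∈ G, the image of x^l · g in Q is not equal to q · (image of a) · q⁻¹. -/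
open Monoid Monoid.Coprod

/-- In `Q = ⟨G, x | xˡ g xˡ h⟩` with `l ≠ 0`, the image of `xˡ g` is not
conjugate in `Q` to the image of any element of `G`. -/
theorem stmt_3 {G : Type*} [Group G] (g h : G) (l : ℤ) (hl : l ≠ 0) :
    ∀ (q : Coprod G (FreeGroup Unit) ⧸ Subgroup.normalClosure
        ({(Coprod.inr (FreeGroup.of ()) : Coprod G (FreeGroup Unit)) ^ l * Coprod.inl g *
          (Coprod.inr (FreeGroup.of ()) : Coprod G (FreeGroup Unit)) ^ l * Coprod.inl h} :
          Set (Coprod G (FreeGroup Unit)))) (a : G),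
      (QuotientGroup.mk' _)
          ((Coprod.inr (FreeGroup.of ()) : Coprod G (FreeGroup Unit)) ^ l * Coprod.inl g) ≠
        q * (QuotientGroup.mk' _) (Coprod.inl a : Coprod G (FreeGroup Unit)) * q⁻¹ := by
  intro q a heq
  -- target abelian group: ℤ modulo 2l
  set M := Multiplicative (ℤ ⧸ AddSubgroup.zmultiples (2 * l)) with hM
  let π : ℤ →+ (ℤ ⧸ AddSubgroup.zmultiples (2 * l)) := QuotientAddGroup.mk' _
  let φ : Coprod G (FreeGroup Unit) →* M :=
    Coprod.lift 1 (FreeGroup.lift fun _ => Multiplicative.ofAdd (π 1))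
  have hφinl : ∀ b : G, φ (Coprod.inl b) = 1 := fun b => by
    simp [φ, Coprod.lift_apply_inl]
  have hφx : φ ((Coprod.inr (FreeGroup.of ()) : Coprod G (FreeGroup Unit)) ^ l)
      = Multiplicative.ofAdd (π l) := by
    rw [map_zpow]
    simp only [φ, Coprod.lift_apply_inr, FreeGroup.lift_apply_of]
    rw [← ofAdd_zsmul, ← map_zsmul, smul_eq_mul, mul_one]
  have hker : Subgroup.normalClosure
      ({(Coprod.inr (FreeGroup.of ()) : Coprod G (FreeGroup Unit)) ^ l * Coprod.inl g *
        (Coprod.inr (FreeGroup.of ()) : Coprod G (FreeGroup Unit)) ^ l * Coprod.inl h} :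
        Set (Coprod G (FreeGroup Unit))) ≤ φ.ker := by
    apply Subgroup.normalClosure_le_normal
    intro x hx
    rcases hx with rfl
    show φ _ = 1
    rw [map_mul, map_mul, map_mul, hφx, hφinl, hφinl, mul_one, mul_one,
      ← ofAdd_add, ← map_add]
    have hz : π (l + l) = 0 := by
      rw [show l + l = 2 * l by ring]
      exact (QuotientAddGroup.eq_zero_iff _).2 (AddSubgroup.mem_zmultiples _)
    rw [hz]
    rfl
  let ψ : (Coprod G (FreeGroup Unit) ⧸ Subgroup.normalClosure
      ({(Coprod.inr (FreeGroup.of ()) : Coprod G (FreeGroup Unit)) ^ l * Coprod.inl g *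
        (Coprod.inr (FreeGroup.of ()) : Coprod G (FreeGroup Unit)) ^ l * Coprod.inl h} :
        Set (Coprod G (FreeGroup Unit)))) →* M :=
    QuotientGroup.lift _ φ hker
  have h2 := congrArg ψ heq
  simp only [map_mul, map_inv] at h2
  have e1 : ψ ((QuotientGroup.mk' _)
      ((Coprod.inr (FreeGroup.of ()) : Coprod G (FreeGroup Unit)) ^ l))
      = Multiplicative.ofAdd (π l) := hφx
  have e2 : ψ ((QuotientGroup.mk' _) (Coprod.inl g : Coprod G (FreeGroup Unit))) = 1 := hφinl g
  have e3 : ψ ((QuotientGroup.mk' _) (Coprod.inl a : Coprod G (FreeGroup Unit))) = 1 := hφinl a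
  rw [e1, e2, e3, mul_one, mul_one, mul_inv_cancel] at h2
  have : π l = 0 := h2
  rw [QuotientAddGroup.mk'_apply, QuotientAddGroup.eq_zero_iff,
    AddSubgroup.mem_zmultiples_iff] at this
  obtain ⟨k, hk⟩ := this
  rw [smul_eq_mul] at hk
  have h0 : (2 * k - 1) * l = 0 := by ring_nf; ring_nf at hk; linarith
  rcases mul_eq_zero.1 h0 with h1 | h1
  · omega
  · exact hl h1
end

section
/- The group defined by the presentation ⟨x, y | x y x⁻¹ y⁻², y x y⁻¹ x⁻²⟩ (i.e. the quotient of the free group on two generators x, y by the normal closure of the two relators x y x⁻¹ y⁻² and y x y⁻¹ x⁻²) is the trivial group. -/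
/-- The relators `x y x⁻¹ y⁻²` and `y x y⁻¹ x⁻²` in the free group on two
generators `x = of 0`, `y = of 1`. -/
def stmt5Rels : Set (FreeGroup (Fin 2)) :=
  {FreeGroup.of 0 * FreeGroup.of 1 * (FreeGroup.of 0)⁻¹ *
      (FreeGroup.of 1)⁻¹ * (FreeGroup.of 1)⁻¹,
   FreeGroup.of 1 * FreeGroup.of 0 * (FreeGroup.of 1)⁻¹ *
      (FreeGroup.of 0)⁻¹ * (FreeGroup.of 0)⁻¹}

/-- The group `⟨x, y | x y x⁻¹ y⁻², y x y⁻¹ x⁻²⟩` is trivial. -/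
theorem stmt_5 : ∀ a : PresentedGroup stmt5Rels, a = 1 := by
  have key : ∀ r ∈ stmt5Rels, PresentedGroup.mk stmt5Rels r = 1 := fun r hr =>
    (QuotientGroup.eq_one_iff _).2 (Subgroup.subset_normalClosure hr)
  have h1 := key _ (Or.inl rfl)
  have h2 := key _ (Or.inr rfl)
  simp only [map_mul, map_inv] at h1 h2
  set x := PresentedGroup.mk stmt5Rels (FreeGroup.of 0) with hxdef
  set y := PresentedGroup.mk stmt5Rels (FreeGroup.of 1) with hydef
  have e1 : x * y * x⁻¹ * y⁻¹ = y := by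
    have := congrArg (· * y) h1
    simpa [mul_assoc] using this
  have e2 : y * x * y⁻¹ * x⁻¹ = x := by
    have := congrArg (· * x) h2
    simpa [mul_assoc] using this
  have e3 : y * x * y⁻¹ * x⁻¹ = y⁻¹ := by
    have := congrArg Inv.inv e1
    simpa [mul_inv_rev, mul_assoc] using this
  have hx : x = y⁻¹ := e2.symm.trans e3
  have hy1 : y = 1 := by
    rw [hx] at e1
    simpa using e1.symm
  have hx1 : x = 1 := by rw [hx, hy1, inv_one]
  have hmk : PresentedGroup.mk stmt5Rels = 1 := by
    apply FreeGroup.ext_hom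
    intro i
    fin_cases i
    · simpa using hx1
    · simpa using hy1
  intro a
  induction a using PresentedGroup.induction_on with
  | H z => rw [hmk]; rfl
end

section
/- Let G be a group and let g, h ∈ G satisfy h² = 1 and g h = h g. Let Q be the quotient of the free product G ∗ F(x) (F(x) the free group on one generator x) by the normal closure of the element x² · g · x⁻¹ · h. Then in Q the relation (x g h)² = g⁻¹ (x g h) g holds, where g, h, x denote the images in Q of g, h and the free generator x. -/
open Monoid Monoid.Coprod

/-- Auxiliary pure group-theoretic computation: if `X² A X⁻¹ B = 1`, `B² = 1` and
`A B = B A`, then `(X A B)² = A⁻¹ (X A B) A`. -/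
lemma aux_stmt14 {Q : Type*} [Group Q] (X A B : Q)
    (hrel : X ^ 2 * A * X⁻¹ * B = 1) (hB2 : B * B = 1) (hAB : A * B = B * A) :
    (X * A * B) ^ 2 = A⁻¹ * (X * A * B) * A := by
  have hBB : B = B⁻¹ := eq_inv_of_mul_eq_one_left hB2
  have h1 : X ^ 2 * A * X⁻¹ = B⁻¹ := mul_eq_one_iff_eq_inv.mp hrel
  have hBval : B = X ^ 2 * A * X⁻¹ := hBB.trans h1.symm
  have hBX : B * X = X * X * A := by rw [hBval, pow_two]; group
  have h4 : X ^ 2 * A * X⁻¹ * (X ^ 2 * A * X⁻¹) = 1 := by rw [← hBval]; exact hB2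
  have hAXA : A * X * A = X⁻¹ := by
    calc A * X * A = X⁻¹ * X⁻¹ * (X ^ 2 * A * X⁻¹ * (X ^ 2 * A * X⁻¹)) * X := by group
      _ = X⁻¹ * X⁻¹ * 1 * X := by rw [h4]
      _ = X⁻¹ := by group
  have h5 : X * A * X * A = X * X⁻¹ := by
    calc X * A * X * A = X * (A * X * A) := by group
      _ = X * X⁻¹ := by rw [hAXA]
  have hXAX : X * A * X = A⁻¹ := by
    calc X * A * X = X * A * X * A * A⁻¹ := by group
      _ = X * X⁻¹ * A⁻¹ := by rw [h5]
      _ = A⁻¹ := by group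
  calc (X * A * B) ^ 2
      = X * A * (B * X) * A * B := by rw [pow_two]; group
    _ = X * A * (X * X * A) * A * B := by rw [hBX]
    _ = X * A * X * (X * A * A * B) := by group
    _ = A⁻¹ * (X * A * A * B) := by rw [hXAX]
    _ = A⁻¹ * X * A * (A * B) := by group
    _ = A⁻¹ * X * A * (B * A) := by rw [hAB]
    _ = A⁻¹ * (X * A * B) * A := by group

/-- In `Q = ⟨G, x | x² g x⁻¹ h⟩` with `h² = 1` and `g h = h g`, the relation
`(x g h)² = g⁻¹ (x g h) g` holds. -/
theorem stmt_14 {G : Type*} [Group G] (g h : G) (hh : h ^ 2 = 1)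
    (hcomm : g * h = h * g) :
    (let π := QuotientGroup.mk' (Subgroup.normalClosure
        ({(Coprod.inr (FreeGroup.of ()) : Coprod G (FreeGroup Unit)) ^ 2 * Coprod.inl g *
          (Coprod.inr (FreeGroup.of ()) : Coprod G (FreeGroup Unit))⁻¹ * Coprod.inl h} :
          Set (Coprod G (FreeGroup Unit))))
     (π (Coprod.inr (FreeGroup.of ())) * π (Coprod.inl g) * π (Coprod.inl h)) ^ 2 =
       (π (Coprod.inl g))⁻¹ *
         (π (Coprod.inr (FreeGroup.of ())) * π (Coprod.inl g) * π (Coprod.inl h)) *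
         π (Coprod.inl g)) := by
  intro π
  set X := π (Coprod.inr (FreeGroup.of ())) with hXdef
  set A := π (Coprod.inl g) with hAdef
  set B := π (Coprod.inl h) with hBdef
  -- The relator maps to 1
  have hrel : X ^ 2 * A * X⁻¹ * B = 1 := by
    have hmem : ((Coprod.inr (FreeGroup.of ()) : Coprod G (FreeGroup Unit)) ^ 2 * Coprod.inl g *
          (Coprod.inr (FreeGroup.of ()) : Coprod G (FreeGroup Unit))⁻¹ * Coprod.inl h) ∈
        Subgroup.normalClosure
        ({(Coprod.inr (FreeGroup.of ()) : Coprod G (FreeGroup Unit)) ^ 2 * Coprod.inl g *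
          (Coprod.inr (FreeGroup.of ()) : Coprod G (FreeGroup Unit))⁻¹ * Coprod.inl h} :
          Set (Coprod G (FreeGroup Unit))) :=
      Subgroup.subset_normalClosure (Set.mem_singleton _)
    have h1 : π ((Coprod.inr (FreeGroup.of ()) : Coprod G (FreeGroup Unit)) ^ 2 * Coprod.inl g *
          (Coprod.inr (FreeGroup.of ()) : Coprod G (FreeGroup Unit))⁻¹ * Coprod.inl h) = 1 := by
      rwa [← MonoidHom.mem_ker, QuotientGroup.ker_mk']
    simpa [map_mul, map_inv, map_pow, hXdef, hAdef, hBdef] using h1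
  -- Basic facts about the images of g and h
  have hB2 : B * B = 1 := by
    rw [hBdef, ← map_mul, ← map_mul, ← sq, hh, map_one, map_one]
  have hAB : A * B = B * A := by
    rw [hAdef, hBdef, ← map_mul, ← map_mul, ← map_mul, ← map_mul, hcomm]
  exact aux_stmt14 X A B hrel hB2 hAB
end

section
/- Let G be a group and let g, h ∈ G satisfy h² = 1 and g h = h g, and suppose g has finite order m ≥ 1. Let Q be the quotient of the free product G ∗ F(x) (F(x) the free group on one generator x) by the normal closure of the element x² · g · x⁻¹ · h. Then the image of x g h in Q satisfies (x g h)^(2^m − 1) = 1; in particular x g h has finite order in Q. -/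
open Monoid Monoid.Coprod

/-- Abstract group-theoretic lemma: if `x² a x⁻¹ b = 1`, `b² = 1`, `a b = b a`,
`aᵐ = 1` (`m ≥ 1`), then `(x a b) ^ (2^m - 1) = 1`. -/
theorem stmt_15_aux {Q : Type*} [Group Q] (a b x : Q)
    (hrel : x ^ 2 * a * x⁻¹ * b = 1) (hb : b ^ 2 = 1) (hab : a * b = b * a)
    (m : ℕ) (hm : 1 ≤ m) (ham : a ^ m = 1) :
    (x * a * b) ^ (2 ^ m - 1) = 1 := by
  rw [pow_two] at hb hrel
  have hbinv : b⁻¹ = b := inv_eq_of_mul_eq_one_right hb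
  have hrel' : x * (x * (a * (x⁻¹ * b))) = 1 := by
    rw [← hrel]; simp [mul_assoc]
  have h1 : x * (x * (a * x⁻¹)) = b := by
    have := congrArg (fun t => t * b) hrel'
    simpa [mul_assoc, hb] using this
  have h2 : a * (x * a) = x⁻¹ := by
    have e1 : (x * (x * (a * x⁻¹))) * (x * (x * (a * x⁻¹))) = 1 := by
      rw [h1]; exact hb
    have := congrArg (fun t => x⁻¹ * (x⁻¹ * (t * x))) e1
    simpa [mul_assoc] using this
  have hbx : b * x = x * (x * a) := by
    have := congrArg (fun t => t * x) h1
    simp only [mul_assoc] at this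
    simpa [mul_assoc] using this.symm
  have hax : a * x = x⁻¹ * a⁻¹ := by
    have := congrArg (fun t => t * a⁻¹) h2
    simpa [mul_assoc] using this
  have key : (x * a * b) ^ 2 = a⁻¹ * (x * a * b) * a := by
    rw [pow_two]
    calc (x * a * b) * (x * a * b)
        = x * a * (b * x) * (a * b) := by simp [mul_assoc]
      _ = x * a * (x * (x * a)) * (a * b) := by rw [hbx]
      _ = x * (a * x) * (x * a * (a * b)) := by simp [mul_assoc]
      _ = x * (x⁻¹ * a⁻¹) * (x * a * (a * b)) := by rw [hax]
      _ = a⁻¹ * (x * a * (a * b)) := by simp [mul_assoc]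
      _ = a⁻¹ * (x * a * (b * a)) := by rw [hab]
      _ = a⁻¹ * (x * a * b) * a := by simp [mul_assoc]
  set y := x * a * b with hy
  have pow_key : ∀ k : ℕ, y ^ (2 ^ k) = a⁻¹ ^ k * y * a ^ k := by
    intro k
    induction k with
    | zero => simp
    | succ k ih =>
      have e : y ^ (2 ^ (k + 1)) = (y ^ (2 ^ k)) ^ 2 := by
        rw [← pow_mul, pow_succ]
      rw [e, ih]
      have expand : (a⁻¹ ^ k * y * a ^ k) ^ 2 = a⁻¹ ^ k * y ^ 2 * a ^ k := by
        rw [pow_two, pow_two]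
        simp [mul_assoc, inv_pow]
      rw [expand, key, pow_succ, pow_succ']
      simp [mul_assoc]
  have hy2m : y ^ (2 ^ m) = y := by
    rw [pow_key m, inv_pow, ham]
    simp
  have hstep : y ^ (2 ^ m - 1) * y = 1 * y := by
    rw [← pow_succ, Nat.sub_add_cancel Nat.one_le_two_pow, hy2m, one_mul]
  exact mul_right_cancel hstep

/-- In `Q = ⟨G, x | x² g x⁻¹ h⟩` with `h² = 1`, `g h = h g` and `gᵐ = 1` (`m ≥ 1`),
the image of `x g h` satisfies `(x g h)^(2^m - 1) = 1`. -/
theorem stmt_15 {G : Type*} [Group G] (g h : G) (hh : h ^ 2 = 1)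
    (hcomm : g * h = h * g) (m : ℕ) (hm : 1 ≤ m) (hgm : g ^ m = 1) :
    (let π := QuotientGroup.mk' (Subgroup.normalClosure
        ({(Coprod.inr (FreeGroup.of ()) : Coprod G (FreeGroup Unit)) ^ 2 * Coprod.inl g *
          (Coprod.inr (FreeGroup.of ()) : Coprod G (FreeGroup Unit))⁻¹ * Coprod.inl h} :
          Set (Coprod G (FreeGroup Unit))))
     (π (Coprod.inr (FreeGroup.of ())) * π (Coprod.inl g) * π (Coprod.inl h)) ^
        (2 ^ m - 1) = 1) := by
  intro π
  have hmem : (Coprod.inr (FreeGroup.of ()) : Coprod G (FreeGroup Unit)) ^ 2 * Coprod.inl g *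
      (Coprod.inr (FreeGroup.of ()) : Coprod G (FreeGroup Unit))⁻¹ * Coprod.inl h ∈
      Subgroup.normalClosure
        ({(Coprod.inr (FreeGroup.of ()) : Coprod G (FreeGroup Unit)) ^ 2 * Coprod.inl g *
          (Coprod.inr (FreeGroup.of ()) : Coprod G (FreeGroup Unit))⁻¹ * Coprod.inl h} :
          Set (Coprod G (FreeGroup Unit))) :=
    Subgroup.subset_normalClosure rfl
  have hone : π ((Coprod.inr (FreeGroup.of ()) : Coprod G (FreeGroup Unit)) ^ 2 * Coprod.inl g *
      (Coprod.inr (FreeGroup.of ()) : Coprod G (FreeGroup Unit))⁻¹ * Coprod.inl h) = 1 :=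
    (QuotientGroup.eq_one_iff _).mpr hmem
  have hrel : π (Coprod.inr (FreeGroup.of ())) ^ 2 * π (Coprod.inl g) *
      (π (Coprod.inr (FreeGroup.of ())))⁻¹ * π (Coprod.inl h) = 1 := by
    simp only [map_mul, map_pow, map_inv] at hone
    exact hone
  exact stmt_15_aux (π (Coprod.inl g)) (π (Coprod.inl h)) (π (Coprod.inr (FreeGroup.of ())))
    hrel
    (by have e : π (Coprod.inl (h ^ 2)) = 1 := by rw [hh]; simp
        simpa [map_pow] using e)
    (by have e : π (Coprod.inl (g * h)) = π (Coprod.inl (h * g)) := by rw [hcomm]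
        simpa [map_mul] using e)
    m hm
    (by have e : π (Coprod.inl (g ^ m)) = 1 := by rw [hgm]; simp
        simpa [map_pow] using e)
end

section
/- Let G be a group, let h ∈ G be an element of order exactly 4, and set g = h². Let l, k be nonzero integers and let Q be the quotient of the free product G ∗ F(x) (F(x) the free group on one generator x) by the normal closure of the element x^l · g · x^k · h. Then the natural homomorphism G → Q is bijective if and only if |l + k| = 1 and (l ≡ 0 mod 4 or k ≡ 0 mod 4). -/
open Monoid Monoid.Coprod

private lemma conj2_zpow {Γ : Type*} [Group Γ] {H T : Γ}
    (e1 : H ^ (2:ℕ) * H ^ (2:ℕ) = 1) (n : ℤ) :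
    (H ^ (2:ℕ) * T * H ^ (2:ℕ)) ^ n = H ^ (2:ℕ) * T ^ n * H ^ (2:ℕ) := by
  have einv : (H ^ (2:ℕ))⁻¹ = H ^ (2:ℕ) := inv_eq_of_mul_eq_one_right e1
  rw [show H ^ (2:ℕ) * T * H ^ (2:ℕ) = H ^ (2:ℕ) * T * (H ^ (2:ℕ))⁻¹ by rw [einv],
    conj_zpow, einv]

private lemma auxA1 {Γ : Type*} [Group Γ] (H T : Γ) (a : ℤ)
    (h4 : H ^ (4:ℕ) = 1)
    (hR : T ^ a * H ^ (2:ℕ) * T ^ (1 - a) * H = 1) :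
    (H ^ (2:ℕ) * T * H ^ (2:ℕ)) ^ (1 - a) = T ^ (-a) * H := by
  have e1 : H ^ (2:ℕ) * H ^ (2:ℕ) = 1 := by
    rw [← pow_add]; norm_num; exact h4
  rw [conj2_zpow e1]
  calc H ^ (2:ℕ) * T ^ (1-a) * H ^ (2:ℕ)
      = T ^ (-a) * (T ^ a * H ^ (2:ℕ) * T ^ (1-a) * H) * (H⁻¹ * H ^ (2:ℕ)) := by group
    _ = T ^ (-a) * H := by rw [hR]; group

private lemma collapse {Γ : Type*} [Group Γ] (H T : Γ) (a b : ℤ)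
    (h4 : H ^ (4:ℕ) = 1) (hab : a + b = 1)
    (hR : T ^ a * H ^ (2:ℕ) * T ^ b * H = 1)
    (hdvd : (4:ℤ) ∣ a ∨ (4:ℤ) ∣ b) : T = H := by
  have hb : b = 1 - a := by omega
  subst hb
  have e1 : H ^ (2:ℕ) * H ^ (2:ℕ) = 1 := by
    rw [← pow_add]; norm_num; exact h4
  -- (ii) : H * T * H = T⁻¹
  have e2 : H ^ (2:ℕ) = T ^ (-a) * H⁻¹ * T ^ (a-1) := by
    calc H ^ (2:ℕ)
        = T ^ (-a) * (T ^ a * H ^ (2:ℕ) * T ^ (1-a) * H) * H⁻¹ * T ^ (a-1) := by group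
      _ = T ^ (-a) * H⁻¹ * T ^ (a-1) := by rw [hR]; group
  have hii' : T ^ (-a) * (H⁻¹ * T⁻¹ * H⁻¹) * T ^ (a-1) = 1 := by
    calc T ^ (-a) * (H⁻¹ * T⁻¹ * H⁻¹) * T ^ (a-1)
        = (T ^ (-a) * H⁻¹ * T ^ (a-1)) * (T ^ (-a) * H⁻¹ * T ^ (a-1)) := by group
      _ = H ^ (2:ℕ) * H ^ (2:ℕ) := by rw [← e2]
      _ = 1 := e1
  have h5 : H⁻¹ * T⁻¹ * H⁻¹ = T := by
    calc H⁻¹ * T⁻¹ * H⁻¹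
        = T ^ a * (T ^ (-a) * (H⁻¹ * T⁻¹ * H⁻¹) * T ^ (a-1)) * T ^ (1-a) := by group
      _ = T := by rw [hii']; group
  -- A1
  have hA1 : (H ^ (2:ℕ) * T * H ^ (2:ℕ)) ^ (1-a) = T ^ (-a) * H := auxA1 H T a h4 hR
  set v := H ^ (2:ℕ) * T * H ^ (2:ℕ) with hv
  -- (v, H) satisfies the same relation
  have hRv : v ^ a * H ^ (2:ℕ) * v ^ (1-a) * H = 1 := by
    rw [hv, conj2_zpow e1, conj2_zpow e1]
    calc (H ^ (2:ℕ) * T ^ a * H ^ (2:ℕ)) * H ^ (2:ℕ) * (H ^ (2:ℕ) * T ^ (1-a) * H ^ (2:ℕ)) * H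
        = H ^ (2:ℕ) * T ^ a * ((H ^ (2:ℕ) * H ^ (2:ℕ)) * H ^ (2:ℕ)) * T ^ (1-a) * H ^ (2:ℕ) * H := by
          group
      _ = H ^ (2:ℕ) * T ^ a * H ^ (2:ℕ) * T ^ (1-a) * H ^ (2:ℕ) * H := by rw [e1]; group
      _ = H ^ (2:ℕ) * (T ^ a * H ^ (2:ℕ) * T ^ (1-a) * H) * (H⁻¹ * H ^ (2:ℕ) * H) := by group
      _ = H ^ (2:ℕ) * (H⁻¹ * H ^ (2:ℕ) * H) := by rw [hR]; group
      _ = H ^ (4:ℕ) := by group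
      _ = 1 := h4
  have hA2' : (H ^ (2:ℕ) * v * H ^ (2:ℕ)) ^ (1-a) = v ^ (-a) * H := auxA1 H v a h4 hRv
  have hTv : H ^ (2:ℕ) * v * H ^ (2:ℕ) = T := by
    rw [hv]
    calc H ^ (2:ℕ) * (H ^ (2:ℕ) * T * H ^ (2:ℕ)) * H ^ (2:ℕ)
        = (H ^ (2:ℕ) * H ^ (2:ℕ)) * T * (H ^ (2:ℕ) * H ^ (2:ℕ)) := by group
      _ = T := by rw [e1]; group
  rw [hTv] at hA2'
  -- commutation of v-powers transported
  have c1 : v ^ (-a) = T ^ (1-a) * H⁻¹ := by rw [hA2']; group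
  have hcomm : (T ^ (1-a) * H⁻¹) * (T ^ (-a) * H) = (T ^ (-a) * H) * (T ^ (1-a) * H⁻¹) := by
    calc (T ^ (1-a) * H⁻¹) * (T ^ (-a) * H)
        = v ^ (-a) * v ^ (1-a) := by rw [c1, hA1]
      _ = v ^ (1-a) * v ^ (-a) := by group
      _ = (T ^ (-a) * H) * (T ^ (1-a) * H⁻¹) := by rw [c1, hA1]
  have hC2 : T * (H⁻¹ * T ^ (-a) * H) = H * T ^ (1-a) * H⁻¹ := by
    calc T * (H⁻¹ * T ^ (-a) * H)
        = T ^ a * (T ^ (1-a) * H⁻¹ * (T ^ (-a) * H)) := by group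
      _ = T ^ a * (T ^ (-a) * H * (T ^ (1-a) * H⁻¹)) := by
          rw [show T ^ (1-a) * H⁻¹ * (T ^ (-a) * H) = T ^ (-a) * H * (T ^ (1-a) * H⁻¹) from hcomm]
      _ = H * T ^ (1-a) * H⁻¹ := by group
  have h3 : H ^ (3:ℕ) = H⁻¹ := by
    calc H ^ (3:ℕ) = H ^ (4:ℕ) * H⁻¹ := by group
      _ = H⁻¹ := by rw [h4]; group
  have hconj1 : H * T * H⁻¹ = H⁻¹ * v * H := by
    conv_lhs => rw [show H⁻¹ = H ^ (3:ℕ) from h3.symm]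
    rw [hv]; group
  have hconj : H * T ^ (1-a) * H⁻¹ = H⁻¹ * v ^ (1-a) * H := by
    calc H * T ^ (1-a) * H⁻¹ = (H * T * H⁻¹) ^ (1-a) := by rw [conj_zpow]
      _ = (H⁻¹ * v * H) ^ (1-a) := by rw [hconj1]
      _ = (H⁻¹ * v * (H⁻¹)⁻¹) ^ (1-a) := by rw [inv_inv]
      _ = H⁻¹ * v ^ (1-a) * (H⁻¹)⁻¹ := by rw [conj_zpow]
      _ = H⁻¹ * v ^ (1-a) * H := by rw [inv_inv]
  have hstar : T * (H⁻¹ * T ^ (-a) * H) = (H⁻¹ * T ^ (-a) * H) * H := by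
    rw [hC2, hconj, hA1]; group
  have hX : T = (H⁻¹ * T ^ (-a) * H) * H * (H⁻¹ * T ^ (-a) * H)⁻¹ := by
    rw [← hstar]; group
  have hT4 : T ^ (4:ℕ) = 1 := by
    calc T ^ (4:ℕ) = ((H⁻¹ * T ^ (-a) * H) * H * (H⁻¹ * T ^ (-a) * H)⁻¹) ^ (4:ℕ) := by rw [← hX]
      _ = (H⁻¹ * T ^ (-a) * H) * H ^ (4:ℕ) * (H⁻¹ * T ^ (-a) * H)⁻¹ := conj_pow
      _ = 1 := by rw [h4]; group
  have hz4 : T ^ (4:ℤ) = 1 := by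
    rw [show (4:ℤ) = ((4:ℕ):ℤ) by norm_num, zpow_natCast, hT4]
  rcases hdvd with ⟨m, hm⟩ | ⟨m, hm⟩
  · have ha : T ^ a = 1 := by rw [hm, zpow_mul, hz4, one_zpow]
    have h1a : T ^ (1-a) = T := by
      rw [show (1:ℤ) - a = 1 + -a by ring, zpow_add, zpow_neg, ha, inv_one, mul_one, zpow_one]
    have hfin : H ^ (2:ℕ) * T * H = 1 := by
      calc H ^ (2:ℕ) * T * H = T ^ a * H ^ (2:ℕ) * T ^ (1-a) * H := by rw [ha, h1a]; group
        _ = 1 := hR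
    calc T = (H⁻¹ * H⁻¹) * (H ^ (2:ℕ) * T * H) * H⁻¹ := by group
      _ = (H⁻¹ * H⁻¹) * 1 * H⁻¹ := by rw [hfin]
      _ = (H ^ (4:ℕ))⁻¹ * H := by group
      _ = H := by rw [h4]; group
  · have hb' : T ^ (1-a) = 1 := by rw [hm, zpow_mul, hz4, one_zpow]
    have ha' : T ^ a = T := by
      rw [show a = 1 + -(1-a) by ring, zpow_add, zpow_neg, hb', inv_one, mul_one, zpow_one]
    have hfin : T * H ^ (2:ℕ) * H = 1 := by
      calc T * H ^ (2:ℕ) * H = T ^ a * H ^ (2:ℕ) * T ^ (1-a) * H := by rw [ha', hb']; group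
        _ = 1 := hR
    calc T = (T * H ^ (2:ℕ) * H) * (H ^ (4:ℕ))⁻¹ * H := by group
      _ = 1 * (H ^ (4:ℕ))⁻¹ * H := by rw [hfin]
      _ = H := by rw [h4]; group

universe u

/-- The 4-cycle `(1 2 3 4)` in `S₅`. -/
private def permH : Equiv.Perm (Fin 5) :=
  ⟨![0, 2, 3, 4, 1], ![0, 4, 1, 2, 3], by decide, by decide⟩

/-- Witness for the residue case `(2,3)`. -/
private def permX23 : Equiv.Perm (Fin 5) :=
  ⟨![1, 4, 0, 3, 2], ![2, 0, 4, 3, 1], by decide, by decide⟩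

/-- Witness for the residue case `(3,2)`. -/
private def permX32 : Equiv.Perm (Fin 5) :=
  ⟨![1, 3, 0, 2, 4], ![2, 0, 3, 1, 4], by decide, by decide⟩

private lemma permH_order : orderOf permH = 4 := by
  rw [orderOf_eq_iff (by norm_num)]
  refine ⟨by decide, ?_⟩
  intro m hm hm0
  interval_cases m <;> decide

private def zmod4Hom {Γ : Type*} [Group Γ] (x : Γ) (hx : orderOf x = 4) :
    Multiplicative (ZMod 4) →* Γ where
  toFun z := x ^ (Multiplicative.toAdd z).val
  map_one' := by
    show x ^ (0 : ZMod 4).val = 1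
    rw [ZMod.val_zero, pow_zero]
  map_mul' a b := by
    show x ^ (Multiplicative.toAdd a + Multiplicative.toAdd b).val =
      x ^ (Multiplicative.toAdd a).val * x ^ (Multiplicative.toAdd b).val
    have hx4 : x ^ (4:ℕ) = 1 := by rw [← hx]; exact pow_orderOf_eq_one x
    have key : ∀ m : ℕ, x ^ (m % 4) = x ^ m := by
      intro m
      conv_rhs => rw [← Nat.div_add_mod m 4]
      rw [pow_add, pow_mul, hx4, one_pow, one_mul]
    rw [ZMod.val_add, key, pow_add]

private lemma zmod4Hom_apply {Γ : Type*} [Group Γ] (x : Γ) (hx : orderOf x = 4)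
    (z : Multiplicative (ZMod 4)) :
    zmod4Hom x hx z = x ^ (Multiplicative.toAdd z).val := rfl

private lemma zmod4Hom_inj {Γ : Type*} [Group Γ] (x : Γ) (hx : orderOf x = 4) :
    Function.Injective (zmod4Hom x hx) := by
  rw [injective_iff_map_eq_one]
  intro z hz
  have h1 : x ^ (Multiplicative.toAdd z).val = 1 := hz
  have h2 : (4 : ℕ) ∣ (Multiplicative.toAdd z).val := by
    have := orderOf_dvd_of_pow_eq_one h1
    rwa [hx] at this
  have h3 : (Multiplicative.toAdd z).val < 4 := ZMod.val_lt _
  have h4 : (Multiplicative.toAdd z).val = 0 := by omega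
  have h5 : Multiplicative.toAdd z = 0 := (ZMod.val_eq_zero _).1 h4
  calc z = Multiplicative.ofAdd (Multiplicative.toAdd z) := rfl
    _ = 1 := by rw [h5]; rfl

private def Fam (G C : Type u) : Bool → Type u := fun i =>
  match i with
  | true => G
  | false => C

private instance famGroup (G C : Type u) [Group G] [Group C] : ∀ i, Group (Fam G C i) :=
  fun i =>
  match i with
  | true => ‹Group G›
  | false => ‹Group C›

private def famHom {G C B : Type u} [Group G] [Group C] [Group B]
    (φG : B →* G) (φC : B →* C) : ∀ i, B →* Fam G C i := fun i =>
  match i with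
  | true => φG
  | false => φC

private lemma zpow_eq_pow_toNat_of_mod4 {Γ : Type*} [Group Γ] (x : Γ)
    (hx : x ^ (4 : ℕ) = 1) (n : ℤ) : x ^ n = x ^ (n % 4).toNat := by
  have h40 : x ^ (4 : ℤ) = 1 := by
    rw [show (4:ℤ) = ((4:ℕ):ℤ) from by norm_num, zpow_natCast, hx]
  conv_lhs => rw [show n = 4 * (n / 4) + n % 4 from (Int.mul_ediv_add_emod n 4).symm]
  rw [zpow_add, zpow_mul, h40, one_zpow, one_mul]
  conv_lhs => rw [show n % 4 = (((n % 4).toNat : ℕ) : ℤ) from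
      (Int.toNat_of_nonneg (Int.emod_nonneg n (by norm_num))).symm]
  rw [zpow_natCast]

private lemma no_surj {G : Type u} [Group G] (h : G) (hord : orderOf h = 4) (l k : ℤ)
    (ξ : Equiv.Perm (Fin 5))
    (hrel : ξ ^ ((l+k)*l) * permH ^ (2:ℕ) * ξ ^ ((l+k)*k) * permH = 1)
    (hsep : ∀ z : ZMod 4, permH ^ z.val ≠ ξ ^ (l+k))
    (hsurj : Function.Surjective
      ((QuotientGroup.mk' (Subgroup.normalClosure
          ({(Coprod.inr (FreeGroup.of ()) : Coprod G (FreeGroup Unit)) ^ l *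
            Coprod.inl (h ^ 2) *
            (Coprod.inr (FreeGroup.of ()) : Coprod G (FreeGroup Unit)) ^ k * Coprod.inl h} :
            Set (Coprod G (FreeGroup Unit))))).comp
        (Coprod.inl : G →* Coprod G (FreeGroup Unit)))) : False := by
  classical
  set r : Coprod G (FreeGroup Unit) :=
    (Coprod.inr (FreeGroup.of ()) : Coprod G (FreeGroup Unit)) ^ l * Coprod.inl (h ^ 2) *
      (Coprod.inr (FreeGroup.of ()) : Coprod G (FreeGroup Unit)) ^ k * Coprod.inl h with hr
  set N := Subgroup.normalClosure ({r} : Set (Coprod G (FreeGroup Unit))) with hN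
  set π := QuotientGroup.mk' N with hπ
  set Cu := ULift.{u} (Equiv.Perm (Fin 5)) with hCu
  set Bu := ULift.{u} (Multiplicative (ZMod 4)) with hBu
  let eC : Cu ≃* Equiv.Perm (Fin 5) := MulEquiv.ulift
  let eB : Bu ≃* Multiplicative (ZMod 4) := MulEquiv.ulift
  let φG : Bu →* G := (zmod4Hom h hord).comp eB.toMonoidHom
  let φC : Bu →* Cu :=
    eC.symm.toMonoidHom.comp ((zmod4Hom permH permH_order).comp eB.toMonoidHom)
  have hφG : Function.Injective ⇑φG := (zmod4Hom_inj h hord).comp eB.injective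
  have hφC : Function.Injective ⇑φC :=
    eC.symm.injective.comp ((zmod4Hom_inj permH permH_order).comp eB.injective)
  have hinj : ∀ i, Function.Injective ⇑(famHom φG φC i) := by
    intro i
    cases i
    · exact hφC
    · exact hφG
  let jG : G →* Monoid.PushoutI (famHom φG φC) := Monoid.PushoutI.of (φ := famHom φG φC) true
  let jC : Cu →* Monoid.PushoutI (famHom φG φC) := Monoid.PushoutI.of (φ := famHom φG φC) false
  have hbase : ∀ b : Bu, jG (φG b) = jC (φC b) := by
    intro b
    rw [show jG (φG b) = Monoid.PushoutI.of (φ := famHom φG φC) true ((famHom φG φC true) b)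
        from rfl,
      show jC (φC b) = Monoid.PushoutI.of (φ := famHom φG φC) false ((famHom φG φC false) b)
        from rfl,
      Monoid.PushoutI.of_apply_eq_base, Monoid.PushoutI.of_apply_eq_base]
  -- jG h = jC (eC.symm permH)
  have hjh : jG h = jC (eC.symm permH) := by
    have hb1 := hbase (eB.symm (Multiplicative.ofAdd (1 : ZMod 4)))
    have e1 : φG (eB.symm (Multiplicative.ofAdd (1 : ZMod 4))) = h := by
      show zmod4Hom h hord (eB (eB.symm (Multiplicative.ofAdd (1 : ZMod 4)))) = h
      rw [eB.apply_symm_apply, zmod4Hom_apply]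
      rw [show Multiplicative.toAdd (Multiplicative.ofAdd (1 : ZMod 4)) = 1 from rfl]
      rw [show (1 : ZMod 4).val = 1 from by decide, pow_one]
    have e2 : φC (eB.symm (Multiplicative.ofAdd (1 : ZMod 4))) = eC.symm permH := by
      show eC.symm (zmod4Hom permH permH_order
        (eB (eB.symm (Multiplicative.ofAdd (1 : ZMod 4))))) = eC.symm permH
      rw [eB.apply_symm_apply, zmod4Hom_apply]
      rw [show Multiplicative.toAdd (Multiplicative.ofAdd (1 : ZMod 4)) = 1 from rfl]
      rw [show (1 : ZMod 4).val = 1 from by decide, pow_one]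
    rw [← e1, ← e2]
    exact hb1
  -- the homomorphism χ₃
  set c0 : Cu := eC.symm (ξ ^ (l + k)) with hc0
  set χ : Coprod G (FreeGroup Unit) →* Monoid.PushoutI (famHom φG φC) :=
    Coprod.lift jG (FreeGroup.lift fun _ : Unit => jC c0) with hχ
  have hχinl : ∀ g : G, χ (Coprod.inl g) = jG g := by
    intro g; rw [hχ, Coprod.lift_apply_inl]
  have hχinr : χ (Coprod.inr (FreeGroup.of ())) = jC c0 := by
    rw [hχ, Coprod.lift_apply_inr, FreeGroup.lift_apply_of]
  have hc0pow : ∀ n : ℤ, (jC c0) ^ n = jC (eC.symm ((ξ ^ (l+k)) ^ n)) := by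
    intro n
    rw [← map_zpow, ← map_zpow]
  have hχr : χ r = 1 := by
    rw [hr, map_mul, map_mul, map_mul, map_zpow, map_zpow, hχinr, hχinl, hχinl,
      hc0pow, hc0pow]
    rw [show jG (h ^ 2) = (jG h) ^ (2:ℕ) from map_pow jG h 2, hjh,
      ← map_pow jC _ 2, ← map_pow eC.symm permH 2]
    rw [← map_mul, ← map_mul, ← map_mul, ← map_mul, ← map_mul, ← map_mul]
    rw [← zpow_mul, ← zpow_mul]
    rw [hrel, map_one, map_one]
  have hker : N ≤ χ.ker := by
    rw [hN]
    exact Subgroup.normalClosure_le_normal (Set.singleton_subset_iff.2 (by exact hχr))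
  obtain ⟨g, hg⟩ := hsurj (π (Coprod.inr (FreeGroup.of ())))
  have happ := congrArg (QuotientGroup.lift N χ hker) hg
  rw [show ((QuotientGroup.mk' N).comp (Coprod.inl : G →* Coprod G (FreeGroup Unit))) g
      = QuotientGroup.mk (Coprod.inl g) from rfl] at happ
  rw [show π (Coprod.inr (FreeGroup.of ())) = QuotientGroup.mk (Coprod.inr (FreeGroup.of ()))
      from rfl] at happ
  rw [QuotientGroup.lift_mk', QuotientGroup.lift_mk', hχinl, hχinr] at happ
  -- happ : jG g = jC c0
  have hmem : jC c0 ∈ jC.range ⊓ jG.range := ⟨⟨c0, rfl⟩, ⟨g, happ⟩⟩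
  rw [show jC.range ⊓ jG.range =
      (Monoid.PushoutI.of (φ := famHom φG φC) false).range ⊓
        (Monoid.PushoutI.of (φ := famHom φG φC) true).range from rfl] at hmem
  rw [Monoid.PushoutI.inf_of_range_eq_base_range hinj
    (show (false : Bool) ≠ true from by simp)] at hmem
  obtain ⟨b, hb⟩ := hmem
  have hφCb : φC b = c0 := by
    apply Monoid.PushoutI.of_injective hinj false
    rw [show Monoid.PushoutI.of (φ := famHom φG φC) false (φC b)
        = Monoid.PushoutI.of (φ := famHom φG φC) false ((famHom φG φC false) b) from rfl,
      Monoid.PushoutI.of_apply_eq_base]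
    exact hb
  have hfin : permH ^ (Multiplicative.toAdd (eB b)).val = ξ ^ (l + k) := by
    have := congrArg eC hφCb
    rw [hc0, eC.apply_symm_apply] at this
    rw [show eC (φC b) = zmod4Hom permH permH_order (eB b) from eC.apply_symm_apply _] at this
    exact this
  exact hsep (Multiplicative.toAdd (eB b)) hfin

private lemma dir_back {G : Type*} [Group G] (h : G) (hord : orderOf h = 4)
    (l k : ℤ) (habs : |l + k| = 1) (hdvd : (4 : ℤ) ∣ l ∨ (4 : ℤ) ∣ k) :
    Function.Bijective
      ((QuotientGroup.mk' (Subgroup.normalClosure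
          ({(Coprod.inr (FreeGroup.of ()) : Coprod G (FreeGroup Unit)) ^ l *
            Coprod.inl (h ^ 2) *
            (Coprod.inr (FreeGroup.of ()) : Coprod G (FreeGroup Unit)) ^ k * Coprod.inl h} :
            Set (Coprod G (FreeGroup Unit))))).comp
        (Coprod.inl : G →* Coprod G (FreeGroup Unit))) := by
  set r : Coprod G (FreeGroup Unit) :=
    (Coprod.inr (FreeGroup.of ()) : Coprod G (FreeGroup Unit)) ^ l * Coprod.inl (h ^ 2) *
      (Coprod.inr (FreeGroup.of ()) : Coprod G (FreeGroup Unit)) ^ k * Coprod.inl h with hr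
  set N := Subgroup.normalClosure ({r} : Set (Coprod G (FreeGroup Unit))) with hN
  set π := QuotientGroup.mk' N with hπ
  set ι := π.comp (Coprod.inl : G →* Coprod G (FreeGroup Unit)) with hι
  have h4 : h ^ (4:ℕ) = 1 := by rw [← hord]; exact pow_orderOf_eq_one h
  have hss : (l + k) * (l + k) = 1 := by
    rcases (abs_eq (by norm_num : (0:ℤ) ≤ 1)).1 habs with h1 | h1 <;> rw [h1] <;> ring
  constructor
  · -- injective
    set χ : Coprod G (FreeGroup Unit) →* G :=
      Coprod.lift (MonoidHom.id G) (FreeGroup.lift fun _ : Unit => h ^ (l + k)) with hχ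
    have hχinr : χ (Coprod.inr (FreeGroup.of ())) = h ^ (l + k) := by
      rw [hχ, Coprod.lift_apply_inr, FreeGroup.lift_apply_of]
    have hχr : χ r = 1 := by
      rw [hr, map_mul, map_mul, map_mul, map_zpow, map_zpow, hχinr,
        hχ, Coprod.lift_apply_inl, Coprod.lift_apply_inl]
      simp only [MonoidHom.id_apply]
      rw [← zpow_mul, ← zpow_mul, ← zpow_natCast h 2]
      nth_rewrite 4 [show h = h ^ (1:ℤ) from (zpow_one h).symm]
      rw [← zpow_add, ← zpow_add, ← zpow_add]
      rw [show ((l+k)*l + ((2:ℕ):ℤ) + (l+k)*k + 1 : ℤ) = 4 from by push_cast; linear_combination hss]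
      rw [show (4:ℤ) = ((4:ℕ):ℤ) from by norm_num, zpow_natCast, h4]
    have hker : N ≤ χ.ker := by
      rw [hN]
      exact Subgroup.normalClosure_le_normal
        (Set.singleton_subset_iff.2 (by exact hχr))
    have hli : Function.LeftInverse (QuotientGroup.lift N χ hker) ι := by
      intro g
      rw [hι, MonoidHom.comp_apply]
      rw [hπ]
      rw [show (QuotientGroup.mk' N) (Coprod.inl g) = QuotientGroup.mk (Coprod.inl g) from rfl]
      rw [QuotientGroup.lift_mk']
      rw [hχ, Coprod.lift_apply_inl]
      rfl
    exact hli.injective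
  · -- surjective
    set T : Coprod G (FreeGroup Unit) ⧸ N := π (Coprod.inr (FreeGroup.of ())) with hT
    set Hq : Coprod G (FreeGroup Unit) ⧸ N := π (Coprod.inl h) with hHq
    have h4Q : Hq ^ (4:ℕ) = 1 := by
      rw [hHq, ← map_pow, ← map_pow, h4, map_one, map_one]
    have hrelQ : T ^ l * Hq ^ (2:ℕ) * T ^ k * Hq = 1 := by
      have h1 : T ^ l * Hq ^ (2:ℕ) * T ^ k * Hq = π r := by
        show T ^ l * Hq ^ (2:ℕ) * T ^ k * Hq =
          π ((Coprod.inr (FreeGroup.of ()) : Coprod G (FreeGroup Unit)) ^ l * Coprod.inl (h ^ 2) *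
            (Coprod.inr (FreeGroup.of ()) : Coprod G (FreeGroup Unit)) ^ k * Coprod.inl h)
        rw [show (Coprod.inl (h ^ 2) : Coprod G (FreeGroup Unit)) = (Coprod.inl h) ^ 2 from
          map_pow Coprod.inl h 2]
        rw [map_mul, map_mul, map_mul, map_zpow, map_zpow, map_pow, hT, hHq]
      rw [h1, hπ]
      exact (QuotientGroup.eq_one_iff r).2
        (Subgroup.subset_normalClosure (Set.mem_singleton r))
    have hcoll : T ^ (l + k) = Hq := by
      refine collapse Hq (T ^ (l + k)) ((l+k)*l) ((l+k)*k) h4Q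
        (by linear_combination hss) ?_ ?_
      · rw [← zpow_mul, ← zpow_mul,
          show (l+k)*((l+k)*l) = l from by linear_combination l * hss,
          show (l+k)*((l+k)*k) = k from by linear_combination k * hss]
        exact hrelQ
      · exact hdvd.imp (fun ⟨c, hc⟩ => ⟨(l+k)*c, by rw [hc]; ring⟩)
          (fun ⟨c, hc⟩ => ⟨(l+k)*c, by rw [hc]; ring⟩)
    have hTH : T = ι (h ^ (l + k)) := by
      have e1 : T = (T ^ (l+k)) ^ (l+k) := by
        rw [← zpow_mul, hss, zpow_one]
      rw [e1, hcoll, hι, MonoidHom.comp_apply, map_zpow, map_zpow]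
    have hmain : ∀ y : Coprod G (FreeGroup Unit), π y ∈ ι.range := by
      intro y
      induction y using Coprod.induction_on with
      | inl g => exact ⟨g, rfl⟩
      | inr w =>
        induction w using FreeGroup.induction_on with
        | C1 => rw [map_one]; exact one_mem _
        | of x => exact ⟨h ^ (l+k), hTH.symm⟩
        | inv_of x hx => rw [map_inv]; exact inv_mem hx
        | mul x y hx hy => rw [map_mul]; exact mul_mem hx hy
      | mul x y hx hy => rw [map_mul]; exact mul_mem hx hy
    intro q
    obtain ⟨y, rfl⟩ := QuotientGroup.mk'_surjective N q
    exact hmain y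

private lemma dir_fwd_abs {G : Type*} [Group G] (h : G) (l k : ℤ)
    (hsurj : Function.Surjective
      ((QuotientGroup.mk' (Subgroup.normalClosure
          ({(Coprod.inr (FreeGroup.of ()) : Coprod G (FreeGroup Unit)) ^ l *
            Coprod.inl (h ^ 2) *
            (Coprod.inr (FreeGroup.of ()) : Coprod G (FreeGroup Unit)) ^ k * Coprod.inl h} :
            Set (Coprod G (FreeGroup Unit))))).comp
        (Coprod.inl : G →* Coprod G (FreeGroup Unit)))) : |l + k| = 1 := by
  set r : Coprod G (FreeGroup Unit) :=
    (Coprod.inr (FreeGroup.of ()) : Coprod G (FreeGroup Unit)) ^ l * Coprod.inl (h ^ 2) *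
      (Coprod.inr (FreeGroup.of ()) : Coprod G (FreeGroup Unit)) ^ k * Coprod.inl h with hr
  set N := Subgroup.normalClosure ({r} : Set (Coprod G (FreeGroup Unit))) with hN
  set π := QuotientGroup.mk' N with hπ
  set A := ℤ ⧸ AddSubgroup.zmultiples (l + k) with hA
  set u : Multiplicative A := Multiplicative.ofAdd ((1 : ℤ) : A) with hu
  set χ : Coprod G (FreeGroup Unit) →* Multiplicative A :=
    Coprod.lift 1 (FreeGroup.lift fun _ : Unit => u) with hχ
  have hχinl : ∀ g : G, χ (Coprod.inl g) = 1 := by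
    intro g; rw [hχ, Coprod.lift_apply_inl]; rfl
  have hχinr : χ (Coprod.inr (FreeGroup.of ())) = u := by
    rw [hχ, Coprod.lift_apply_inr, FreeGroup.lift_apply_of]
  have hupow : ∀ n : ℤ, u ^ n = Multiplicative.ofAdd ((n : ℤ) : A) := by
    intro n
    rw [hu, ← ofAdd_zsmul]
    congr 1
    show n • ((1:ℤ) : A) = ((n:ℤ) : A)
    rw [show ((n:ℤ) : A) = ((n • (1:ℤ) : ℤ) : A) from by norm_num]
    exact (QuotientAddGroup.mk_zsmul _ _ _).symm
  have hχr : χ r = 1 := by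
    rw [hr, map_mul, map_mul, map_mul, map_zpow, map_zpow, hχinr, hχinl, hχinl,
      hupow, hupow, mul_one, mul_one, ← ofAdd_add]
    rw [show ((l:A) + (k:A)) = ((l + k : ℤ) : A) from (QuotientAddGroup.mk_add _ _ _).symm]
    rw [show (((l + k : ℤ)) : A) = 0 from
      (QuotientAddGroup.eq_zero_iff _).2 (AddSubgroup.mem_zmultiples _)]
    rfl
  have hker : N ≤ χ.ker := by
    rw [hN]
    exact Subgroup.normalClosure_le_normal (Set.singleton_subset_iff.2 (by exact hχr))
  obtain ⟨g, hg⟩ := hsurj (π (Coprod.inr (FreeGroup.of ())))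
  have happ := congrArg (QuotientGroup.lift N χ hker) hg
  rw [show ((QuotientGroup.mk' N).comp (Coprod.inl : G →* Coprod G (FreeGroup Unit))) g
      = QuotientGroup.mk (Coprod.inl g) from rfl] at happ
  rw [show π (Coprod.inr (FreeGroup.of ())) = QuotientGroup.mk (Coprod.inr (FreeGroup.of ()))
      from rfl] at happ
  rw [QuotientGroup.lift_mk', QuotientGroup.lift_mk', hχinl, hχinr] at happ
  -- happ : 1 = u
  have h1 : ((1 : ℤ) : A) = 0 := by
    have := happ.symm
    rw [hu] at this
    have h2 : ((1:ℤ):A) = Multiplicative.toAdd (Multiplicative.ofAdd ((1:ℤ):A)) := rfl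
    rw [h2, this]
    rfl
  have hdvd : (l + k) ∣ 1 := by
    rw [QuotientAddGroup.eq_zero_iff] at h1
    exact Int.mem_zmultiples_iff.1 h1
  rcases Int.isUnit_iff.1 (isUnit_of_dvd_one hdvd) with h1 | h1 <;> rw [h1] <;> rfl

/-- Case (J₄) of Theorem 4.1: for `h ∈ G` of order exactly 4, `g = h²`, and
nonzero integers `l, k`, the natural map `G → ⟨G, x | xˡ g xᵏ h⟩` is an
isomorphism iff `|l + k| = 1` and (`4 ∣ l` or `4 ∣ k`). -/
theorem stmt_16 {G : Type*} [Group G] (h : G) (hord : orderOf h = 4)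
    (l k : ℤ) (hl : l ≠ 0) (hk : k ≠ 0) :
    Function.Bijective
      ((QuotientGroup.mk' (Subgroup.normalClosure
          ({(Coprod.inr (FreeGroup.of ()) : Coprod G (FreeGroup Unit)) ^ l *
            Coprod.inl (h ^ 2) *
            (Coprod.inr (FreeGroup.of ()) : Coprod G (FreeGroup Unit)) ^ k * Coprod.inl h} :
            Set (Coprod G (FreeGroup Unit))))).comp
        (Coprod.inl : G →* Coprod G (FreeGroup Unit))) ↔
      (|l + k| = 1 ∧ ((4 : ℤ) ∣ l ∨ (4 : ℤ) ∣ k)) := by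
  constructor
  · intro hbij
    have habs : |l + k| = 1 := dir_fwd_abs h l k hbij.surjective
    refine ⟨habs, ?_⟩
    by_contra hcon
    push_neg at hcon
    obtain ⟨hnl, hnk⟩ := hcon
    have hss : (l + k) * (l + k) = 1 := by
      rcases (abs_eq (by norm_num : (0:ℤ) ≤ 1)).1 habs with h1 | h1 <;> rw [h1] <;> ring
    have hs1 : l + k = 1 ∨ l + k = -1 := (abs_eq (by norm_num : (0:ℤ) ≤ 1)).1 habs
    have hab1 : (l+k)*l + (l+k)*k = 1 := by linear_combination hss
    have hnal : ¬ (4:ℤ) ∣ (l+k)*l := by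
      rintro ⟨c, hc⟩
      exact hnl ⟨(l+k)*c, by linear_combination (l+k)*hc - l*hss⟩
    have hnak : ¬ (4:ℤ) ∣ (l+k)*k := by
      rintro ⟨c, hc⟩
      exact hnk ⟨(l+k)*c, by linear_combination (l+k)*hc - k*hss⟩
    have hcases : (((l+k)*l) % 4 = 2 ∧ ((l+k)*k) % 4 = 3) ∨
        (((l+k)*l) % 4 = 3 ∧ ((l+k)*k) % 4 = 2) := by omega
    have hx234 : permX23 ^ (4:ℕ) = 1 := by decide
    have hx324 : permX32 ^ (4:ℕ) = 1 := by decide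
    rcases hcases with ⟨ha2, hb3⟩ | ⟨ha3, hb2⟩
    · refine no_surj h hord l k permX23 ?_ ?_ hbij.surjective
      · rw [zpow_eq_pow_toNat_of_mod4 permX23 hx234 ((l+k)*l),
          zpow_eq_pow_toNat_of_mod4 permX23 hx234 ((l+k)*k), ha2, hb3]
        decide
      · rcases hs1 with h1 | h1 <;> rw [h1]
        · rw [zpow_one]; decide
        · rw [zpow_neg_one]; decide
    · refine no_surj h hord l k permX32 ?_ ?_ hbij.surjective
      · rw [zpow_eq_pow_toNat_of_mod4 permX32 hx324 ((l+k)*l),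
          zpow_eq_pow_toNat_of_mod4 permX32 hx324 ((l+k)*k), ha3, hb2]
        decide
      · rcases hs1 with h1 | h1 <;> rw [h1]
        · rw [zpow_one]; decide
        · rw [zpow_neg_one]; decide
  · rintro ⟨habs, hdvd⟩
    exact dir_back h hord l k habs hdvd
end
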